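/- Let Θ₀ : ℝ → [0,1] be a fixed smooth even function with Θ₀(x) = 1 for |x| ≤ 1 and Θ₀(x) = 0 for |x| ≥ 2. For δ ∈ (0,1), λ > 0 and s ≥ 1, set θ(y) = Θ₀(λy/δ). Then for all integers j, k ≥ 0 and every R ∈ 𝒵_k there exists a constant C (depending only on R, j, k and Θ₀, not on δ, λ, s) such that whenever 1/(2s) ≤ λ ≤ min(δ, 2/s): (a) ‖(d^j θ/dy^j) · R‖_{L²(ℝ)} ≤ C δ^{1/2+k−j} s^{1/2+k−j}; (b) if j+k ≥ 1 then ‖ d/dy( (d^j θ/dy^j) · R )‖_{L²(ℝ)} ≤ C δ^{−1/2+k−j} s^{−1/2+k−j}; (c) if k = 0 then ‖d/dy(θ R)‖_{L²(ℝ)} ≤ C. In particular ‖(d^jθ/dy^j) · R‖_{H¹(ℝ)} ≤ C δ^{1/2+k−j} s^{1/2+k−j}. -/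

import Mathlib

open scoped ContDiff

/-- The class `𝒴` of smooth even real functions decaying, together with all their derivatives,
like a polynomial times `e^{-|x|}`. -/
def memY (g : ℝ → ℝ) : Prop :=
  ContDiff ℝ ∞ g ∧ (∀ x, g (-x) = g x) ∧
    ∃ q : ℕ, ∀ p : ℕ, ∃ C : ℝ, 0 < C ∧ ∀ x : ℝ,
      |iteratedDeriv p g x| ≤ C * (1 + x ^ 2) ^ ((q : ℝ) / 2) * Real.exp (-|x|)

/-- `χ` is a smooth even cut-off with `0 ≤ χ ≤ 1`, `χ = 0` on `|x| ≤ 1/2` and `χ = 1` on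
`|x| ≥ 1`. -/
def IsCutChi (χ : ℝ → ℝ) : Prop :=
  ContDiff ℝ ∞ χ ∧ (∀ x, χ (-x) = χ x) ∧ (∀ x, 0 ≤ χ x ∧ χ x ≤ 1) ∧
    (∀ x : ℝ, |x| ≤ 1 / 2 → χ x = 0) ∧ (∀ x : ℝ, 1 ≤ |x| → χ x = 1)

/-- The class `𝒵ₖ = 𝒴 + span{μ₀, …, μₖ}` where `μᵢ(x) = |x|^i χ(x)`. -/
def memZ (χ : ℝ → ℝ) (k : ℕ) (g : ℝ → ℝ) : Prop :=
  ∃ v : ℝ → ℝ, memY v ∧ ∃ c : ℕ → ℝ, ∀ x : ℝ,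
    g x = v x + ∑ i ∈ Finset.range (k + 1), c i * (|x| ^ i * χ x)

/-- The rescaled cut-off `θ(y) = Θ₀(λy/δ)`. -/
noncomputable def cutTheta (Θ₀ : ℝ → ℝ) (δ lam : ℝ) (y : ℝ) : ℝ := Θ₀ (lam * y / δ)


namespace CutoffEstAux
open MeasureTheory Set


lemma sqrt_add_le {x y : ℝ} (hx : 0 ≤ x) (hy : 0 ≤ y) :
    Real.sqrt (x + y) ≤ Real.sqrt x + Real.sqrt y := by
  have h : x + y ≤ (Real.sqrt x + Real.sqrt y) ^ 2 := by
    nlinarith [Real.sq_sqrt hx, Real.sq_sqrt hy, Real.sqrt_nonneg x, Real.sqrt_nonneg y]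
  calc Real.sqrt (x + y) ≤ Real.sqrt ((Real.sqrt x + Real.sqrt y) ^ 2) := Real.sqrt_le_sqrt h
    _ = Real.sqrt x + Real.sqrt y := Real.sqrt_sq (by positivity)

lemma integrable_exp_neg_abs : Integrable (fun x : ℝ => Real.exp (-|x|)) := by
  have h1 : IntegrableOn (fun x : ℝ => Real.exp (-|x|)) (Ioi (0:ℝ)) := by
    apply ((exp_neg_integrableOn_Ioi 0 one_pos)).congr_fun ?_ measurableSet_Ioi
    intro x hx; simp [abs_of_pos (mem_Ioi.1 hx)]
  have h2 : IntegrableOn (fun x : ℝ => Real.exp (-|x|)) (Iic (0:ℝ)) := by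
    apply (integrableOn_exp_Iic 0).congr_fun ?_ measurableSet_Iic
    intro x hx; simp [abs_of_nonpos (mem_Iic.1 hx)]
  rw [← integrableOn_univ, ← Set.Iic_union_Ioi (a := (0:ℝ))]
  exact h2.union h1

/-- Core L² bound for a bounded compactly supported function. -/
lemma int_sq_le_of_bound {h : ℝ → ℝ} (hm : AEStronglyMeasurable h volume)
    {D A : ℝ} (hD : 0 ≤ D) (hA : 0 < A)
    (hb : ∀ y, |h y| ≤ D) (hsupp : ∀ y : ℝ, A < |y| → h y = 0) :
    Integrable (fun y => (h y) ^ 2) ∧ ∫ y : ℝ, (h y) ^ 2 ≤ D ^ 2 * (2 * A) := by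
  set ind : ℝ → ℝ := (Icc (-A) A).indicator (fun _ => D ^ 2) with hind_def
  have hind : Integrable ind := by
    rw [hind_def, integrable_indicator_iff measurableSet_Icc]
    exact integrableOn_const (by rw [Real.volume_Icc]; exact ENNReal.ofReal_ne_top)
  have hle : ∀ y, (h y) ^ 2 ≤ ind y := by
    intro y
    by_cases hy : y ∈ Icc (-A) A
    · rw [hind_def, indicator_of_mem hy]
      have h1 := hb y
      nlinarith [abs_nonneg (h y), sq_abs (h y)]
    · rw [hind_def, indicator_of_notMem hy]
      have hAy : A < |y| := by
        rw [mem_Icc, not_and_or, not_le, not_le] at hy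
        rcases hy with hy | hy
        · calc A < -y := by linarith
            _ ≤ |y| := neg_le_abs y
        · exact lt_of_lt_of_le hy (le_abs_self y)
      rw [hsupp y hAy]; norm_num
  have hm2 : AEStronglyMeasurable (fun y => (h y) ^ 2) volume := by
    simpa [pow_two, Pi.mul_def] using hm.mul hm
  have hint : Integrable (fun y => (h y) ^ 2) := by
    apply hind.mono' hm2
    filter_upwards with y
    rw [Real.norm_eq_abs, abs_of_nonneg (sq_nonneg _)]
    exact hle y
  refine ⟨hint, ?_⟩
  calc ∫ y : ℝ, (h y) ^ 2 ≤ ∫ y : ℝ, ind y := integral_mono hint hind hle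
    _ = D ^ 2 * (2 * A) := by
        rw [hind_def, integral_indicator measurableSet_Icc, setIntegral_const, smul_eq_mul,
          Real.volume_real_Icc_of_le (by linarith)]
        ring

lemma l2_bound {h : ℝ → ℝ} (hm : AEStronglyMeasurable h volume)
    {D A : ℝ} (hD : 0 ≤ D) (hA : 0 < A)
    (hb : ∀ y, |h y| ≤ D) (hsupp : ∀ y : ℝ, A < |y| → h y = 0) :
    Real.sqrt (∫ y : ℝ, (h y) ^ 2) ≤ D * Real.sqrt (2 * A) := by
  obtain ⟨_, hle⟩ := int_sq_le_of_bound hm hD hA hb hsupp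
  calc Real.sqrt (∫ y : ℝ, (h y) ^ 2) ≤ Real.sqrt (D ^ 2 * (2 * A)) := Real.sqrt_le_sqrt hle
    _ = D * Real.sqrt (2 * A) := by
        rw [Real.sqrt_mul (sq_nonneg D), Real.sqrt_sq hD]

/-- L² bound by a fixed square-integrable dominating function. -/
lemma int_sq_le_of_dom {h G : ℝ → ℝ} (hm : AEStronglyMeasurable h volume)
    (hG : Integrable (fun y => (G y) ^ 2)) (hb : ∀ y, |h y| ≤ G y) :
    Integrable (fun y => (h y) ^ 2) ∧ ∫ y : ℝ, (h y) ^ 2 ≤ ∫ y : ℝ, (G y) ^ 2 := by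
  have hle : ∀ y, (h y) ^ 2 ≤ (G y) ^ 2 := by
    intro y
    have h1 := hb y
    nlinarith [abs_nonneg (h y), sq_abs (h y)]
  have hm2 : AEStronglyMeasurable (fun y => (h y) ^ 2) volume := by
    simpa [pow_two, Pi.mul_def] using hm.mul hm
  have hint : Integrable (fun y => (h y) ^ 2) := by
    apply hG.mono' hm2
    filter_upwards with y
    rw [Real.norm_eq_abs, abs_of_nonneg (sq_nonneg _)]
    exact hle y
  exact ⟨hint, integral_mono hint hG hle⟩

lemma sqrt_int_split {h a₁ a₂ : ℝ → ℝ} (hh : AEStronglyMeasurable h volume)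
    (heq : ∀ y, h y = a₁ y + a₂ y)
    (h1 : Integrable (fun y => (a₁ y) ^ 2)) (h2 : Integrable (fun y => (a₂ y) ^ 2)) :
    Real.sqrt (∫ y : ℝ, (h y) ^ 2) ≤
      Real.sqrt 2 * Real.sqrt (∫ y : ℝ, (a₁ y) ^ 2) +
      Real.sqrt 2 * Real.sqrt (∫ y : ℝ, (a₂ y) ^ 2) := by
  have hm2 : AEStronglyMeasurable (fun y => (h y) ^ 2) volume := by
    simpa [pow_two, Pi.mul_def] using hh.mul hh
  have hdom : Integrable (fun y => 2 * (a₁ y) ^ 2 + 2 * (a₂ y) ^ 2) :=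
    (h1.const_mul 2).add (h2.const_mul 2)
  have hle : ∀ y, (h y) ^ 2 ≤ 2 * (a₁ y) ^ 2 + 2 * (a₂ y) ^ 2 := by
    intro y; rw [heq y]; nlinarith [sq_nonneg (a₁ y - a₂ y)]
  have hint : Integrable (fun y => (h y) ^ 2) := by
    apply hdom.mono' hm2
    filter_upwards with y
    rw [Real.norm_eq_abs, abs_of_nonneg (sq_nonneg _)]
    exact hle y
  have hI : ∫ y : ℝ, (h y) ^ 2 ≤ 2 * (∫ y : ℝ, (a₁ y) ^ 2) + 2 * (∫ y : ℝ, (a₂ y) ^ 2) := by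
    calc ∫ y : ℝ, (h y) ^ 2 ≤ ∫ y : ℝ, (2 * (a₁ y) ^ 2 + 2 * (a₂ y) ^ 2) :=
          integral_mono hint hdom hle
      _ = 2 * (∫ y : ℝ, (a₁ y) ^ 2) + 2 * (∫ y : ℝ, (a₂ y) ^ 2) := by
          rw [integral_add (h1.const_mul 2) (h2.const_mul 2), integral_const_mul,
            integral_const_mul]
  have hn1 : (0:ℝ) ≤ 2 * ∫ y : ℝ, (a₁ y) ^ 2 := by
    have := integral_nonneg (μ := volume) (f := fun y : ℝ => (a₁ y) ^ 2) (fun y : ℝ => sq_nonneg (a₁ y)); linarith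
  have hn2 : (0:ℝ) ≤ 2 * ∫ y : ℝ, (a₂ y) ^ 2 := by
    have := integral_nonneg (μ := volume) (f := fun y : ℝ => (a₂ y) ^ 2) (fun y : ℝ => sq_nonneg (a₂ y)); linarith
  calc Real.sqrt (∫ y : ℝ, (h y) ^ 2)
      ≤ Real.sqrt (2 * (∫ y : ℝ, (a₁ y) ^ 2) + 2 * (∫ y : ℝ, (a₂ y) ^ 2)) :=
        Real.sqrt_le_sqrt hI
    _ ≤ Real.sqrt (2 * ∫ y : ℝ, (a₁ y) ^ 2) + Real.sqrt (2 * ∫ y : ℝ, (a₂ y) ^ 2) :=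
        sqrt_add_le hn1 hn2
    _ = Real.sqrt 2 * Real.sqrt (∫ y : ℝ, (a₁ y) ^ 2) +
        Real.sqrt 2 * Real.sqrt (∫ y : ℝ, (a₂ y) ^ 2) := by
        rw [Real.sqrt_mul (by norm_num : (0:ℝ) ≤ 2), Real.sqrt_mul (by norm_num : (0:ℝ) ≤ 2)]


lemma bounded_of_compact_support {f : ℝ → ℝ} (hf : Continuous f) {a : ℝ} (ha : 0 < a)
    (h0 : ∀ x : ℝ, a < |x| → f x = 0) : ∃ M : ℝ, 0 < M ∧ ∀ x, |f x| ≤ M := by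
  obtain ⟨M, hM⟩ := (isCompact_Icc (a := -a) (b := a)).exists_bound_of_continuousOn
    hf.continuousOn
  refine ⟨max M 0 + 1, by positivity, fun x => ?_⟩
  by_cases hx : x ∈ Icc (-a) a
  · have := hM x hx
    rw [Real.norm_eq_abs] at this
    have : |f x| ≤ max M 0 := le_trans this (le_max_left _ _)
    linarith
  · have hax : a < |x| := by
      rw [mem_Icc, not_and_or, not_le, not_le] at hx
      rcases hx with hx | hx
      · calc a < -x := by linarith
          _ ≤ |x| := neg_le_abs x
      · exact lt_of_lt_of_le hx (le_abs_self x)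
    rw [h0 x hax]
    simp
    positivity

lemma iteratedDeriv_zero_fun (n : ℕ) : iteratedDeriv n (fun _ : ℝ => (0:ℝ)) = fun _ => 0 := by
  induction n with
  | zero => simp [iteratedDeriv_zero]
  | succ n ih =>
    rw [iteratedDeriv_succ', show deriv (fun _ : ℝ => (0:ℝ)) = fun _ => (0:ℝ) from
      funext fun x => deriv_const x 0]
    exact ih

lemma iteratedDeriv_const_fun (n : ℕ) (c : ℝ) (hn : 1 ≤ n) :
    iteratedDeriv n (fun _ : ℝ => c) = fun _ => 0 := by
  obtain ⟨m, rfl⟩ := Nat.exists_eq_add_of_le hn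
  rw [show 1 + m = m + 1 by ring, iteratedDeriv_succ', show deriv (fun _ : ℝ => c) = fun _ => (0:ℝ)
    from funext fun x => deriv_const x c]
  exact iteratedDeriv_zero_fun m

/-- vanishing of iterated derivatives where the function is locally constant -/
lemma iteratedDeriv_eq_zero_of_const_on {f : ℝ → ℝ} {U : Set ℝ} (hU : IsOpen U) {c : ℝ}
    (hc : ∀ x ∈ U, f x = c) {n : ℕ} (hn : 1 ≤ n) : ∀ x ∈ U, iteratedDeriv n f x = 0 := by
  intro x hx
  have h1 : Set.EqOn f (fun _ => c) U := fun y hy => hc y hy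
  have := (h1.iteratedDeriv_of_isOpen hU n) hx
  rw [this, iteratedDeriv_const_fun n c hn]

lemma rpow_comparison {t u : ℝ} (ht : 0 < t) (hu : 0 < u) (h1 : u / 2 ≤ t) (h2 : t ≤ 2 * u)
    (a : ℝ) (m : ℕ) (ha : |a| ≤ m) : t ^ a ≤ 2 ^ m * u ^ a := by
  have h2m : ((2:ℝ)) ^ (a) ≤ 2 ^ (m:ℝ) :=
    Real.rpow_le_rpow_of_exponent_le one_le_two (le_trans (le_abs_self a) ha)
  have h2m' : ((2:ℝ)) ^ (-a) ≤ 2 ^ (m:ℝ) :=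
    Real.rpow_le_rpow_of_exponent_le one_le_two (le_trans (neg_le_abs a) ha)
  rcases le_or_gt 0 a with ha0 | ha0
  · calc t ^ a ≤ (2 * u) ^ a := Real.rpow_le_rpow ht.le h2 ha0
      _ = 2 ^ a * u ^ a := Real.mul_rpow (by norm_num) hu.le
      _ ≤ 2 ^ (m:ℝ) * u ^ a := by
          exact mul_le_mul_of_nonneg_right h2m (Real.rpow_nonneg hu.le a)
      _ = 2 ^ m * u ^ a := by rw [Real.rpow_natCast]
  · have hu2 : 0 < u / 2 := by linarith
    calc t ^ a ≤ (u / 2) ^ a := Real.rpow_le_rpow_of_nonpos hu2 h1 ha0.le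
      _ = u ^ a / 2 ^ a := Real.div_rpow hu.le (by norm_num : (0:ℝ) ≤ 2) a
      _ = u ^ a * 2 ^ (-a) := by rw [Real.rpow_neg (by norm_num : (0:ℝ) ≤ 2)]; ring
      _ ≤ u ^ a * 2 ^ (m:ℝ) := by
          exact mul_le_mul_of_nonneg_left h2m' (Real.rpow_nonneg hu.le a)
      _ = 2 ^ m * u ^ a := by rw [Real.rpow_natCast]; ring

lemma key_bound {t u : ℝ} (ht : 1 ≤ t) (hu : 1 / 2 ≤ u) (h1 : u / 2 ≤ t) (h2 : t ≤ 2 * u)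
    (p q : ℕ) {K : ℝ} (hK : 0 ≤ K) :
    K * (t⁻¹ ^ p * t ^ q) * Real.sqrt (2 * (2 * t)) ≤
      K * 2 ^ (p + q + 2) * u ^ ((1:ℝ) / 2 + (q:ℝ) - (p:ℝ)) := by
  have ht0 : 0 < t := lt_of_lt_of_le one_pos ht
  have hu0 : 0 < u := by linarith
  have hsqrt : Real.sqrt (2 * (2 * t)) = 2 * t ^ ((1:ℝ)/2) := by
    rw [show (2:ℝ) * (2 * t) = 4 * t by ring, Real.sqrt_mul (by norm_num : (0:ℝ) ≤ 4),
      show Real.sqrt 4 = 2 by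
        rw [show (4:ℝ) = 2 ^ 2 by norm_num]; exact Real.sqrt_sq (by norm_num),
      Real.sqrt_eq_rpow]
  have hcomb : t⁻¹ ^ p * t ^ q * t ^ ((1:ℝ)/2) = t ^ ((1:ℝ)/2 + (q:ℝ) - (p:ℝ)) := by
    rw [inv_pow, ← Real.rpow_natCast t p, ← Real.rpow_natCast t q,
      ← Real.rpow_neg ht0.le, ← Real.rpow_add ht0, ← Real.rpow_add ht0]
    congr 1
    ring
  have hstep : t ^ ((1:ℝ)/2 + (q:ℝ) - (p:ℝ)) ≤
      2 ^ (p + q + 1) * u ^ ((1:ℝ)/2 + (q:ℝ) - (p:ℝ)) := by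
    apply rpow_comparison ht0 hu0 h1 h2
    rw [abs_le]
    constructor
    · push_cast; linarith [Nat.cast_nonneg (α := ℝ) p, Nat.cast_nonneg (α := ℝ) q]
    · push_cast; linarith [Nat.cast_nonneg (α := ℝ) p, Nat.cast_nonneg (α := ℝ) q]
  calc K * (t⁻¹ ^ p * t ^ q) * Real.sqrt (2 * (2 * t))
      = K * 2 * (t⁻¹ ^ p * t ^ q * t ^ ((1:ℝ)/2)) := by rw [hsqrt]; ring
    _ = K * 2 * t ^ ((1:ℝ)/2 + (q:ℝ) - (p:ℝ)) := by rw [hcomb]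
    _ ≤ K * 2 * (2 ^ (p + q + 1) * u ^ ((1:ℝ)/2 + (q:ℝ) - (p:ℝ))) := by
        apply mul_le_mul_of_nonneg_left hstep (by positivity)
    _ = K * 2 ^ (p + q + 2) * u ^ ((1:ℝ)/2 + (q:ℝ) - (p:ℝ)) := by ring

lemma exp_neg_half_le (t : ℝ) (ht : 1 ≤ t) : Real.exp (-(t/2)) ≤ 16 * t⁻¹ ^ 2 := by
  have ht0 : 0 < t := lt_of_lt_of_le one_pos ht
  have h1 : t ^ 2 / 16 ≤ Real.exp (t / 2) := by
    have h2 : (1 + t/4) ^ 2 ≤ Real.exp (t/4) ^ 2 := by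
      apply pow_le_pow_left₀ (by linarith) (by linarith [Real.add_one_le_exp (t/4)]) 2
    calc t ^ 2 / 16 = (t/4) ^ 2 := by ring
      _ ≤ (1 + t/4) ^ 2 := by nlinarith
      _ ≤ Real.exp (t/4) ^ 2 := h2
      _ = Real.exp (t/2) := by rw [← Real.exp_nat_mul]; congr 1; push_cast; ring
  have h3 : 0 < t ^ 2 / 16 := by positivity
  calc Real.exp (-(t/2)) = (Real.exp (t/2))⁻¹ := by rw [Real.exp_neg]
    _ ≤ (t ^ 2 / 16)⁻¹ := by
        apply inv_anti₀ h3 h1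
    _ = 16 * t⁻¹ ^ 2 := by field_simp

lemma poly_le_exp (q : ℕ) (x : ℝ) :
    ((1:ℝ) + x ^ 2) ^ ((q:ℝ) / 2) ≤ (2 * ((q:ℝ) + 1)) ^ q * Real.exp (|x| / 2) := by
  have hx : (0:ℝ) ≤ |x| := abs_nonneg x
  have h1 : (1:ℝ) + x ^ 2 ≤ (1 + |x|) ^ 2 := by nlinarith [sq_abs x]
  have h1' : (0:ℝ) ≤ 1 + x ^ 2 := by positivity
  have hb : (0:ℝ) ≤ 1 + |x| := by linarith
  have h2 : ((1:ℝ) + x ^ 2) ^ ((q:ℝ) / 2) ≤ ((1 + |x|) ^ 2) ^ ((q:ℝ) / 2) :=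
    Real.rpow_le_rpow h1' h1 (by positivity)
  have h3 : (((1:ℝ) + |x|) ^ 2) ^ ((q:ℝ) / 2) = (1 + |x|) ^ q := by
    rw [← Real.rpow_natCast (1 + |x|) 2, ← Real.rpow_mul hb]
    rw [show ((2:ℕ):ℝ) * ((q:ℝ)/2) = (q:ℝ) by push_cast; ring, Real.rpow_natCast]
  have hm : (0:ℝ) < 2 * ((q:ℝ) + 1) := by positivity
  have hbase : 1 + |x| ≤ 2 * ((q:ℝ) + 1) * Real.exp (|x| / (2 * ((q:ℝ) + 1))) := by
    have he := Real.add_one_le_exp (|x| / (2 * ((q:ℝ) + 1)))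
    have hkey : 2 * ((q:ℝ) + 1) * (|x| / (2 * ((q:ℝ) + 1)) + 1) = |x| + 2 * ((q:ℝ) + 1) := by
      field_simp
    nlinarith [Real.exp_pos (|x| / (2 * ((q:ℝ) + 1)))]
  have h4 : ((1:ℝ) + |x|) ^ q ≤ (2 * ((q:ℝ) + 1) * Real.exp (|x| / (2 * ((q:ℝ) + 1)))) ^ q :=
    pow_le_pow_left₀ hb hbase q
  have h5 : (2 * ((q:ℝ) + 1) * Real.exp (|x| / (2 * ((q:ℝ) + 1)))) ^ q
      ≤ (2 * ((q:ℝ) + 1)) ^ q * Real.exp (|x| / 2) := by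
    rw [mul_pow, ← Real.exp_nat_mul]
    apply mul_le_mul_of_nonneg_left _ (by positivity)
    apply Real.exp_le_exp.2
    rw [mul_div_assoc']
    rw [div_le_div_iff₀ hm two_pos]
    nlinarith [abs_nonneg x, Nat.cast_nonneg (α := ℝ) q]
  calc ((1:ℝ) + x ^ 2) ^ ((q:ℝ) / 2) ≤ (1 + |x|) ^ q := h3 ▸ h2
    _ ≤ _ := le_trans h4 h5

lemma memY_deriv_bound {v : ℝ → ℝ} (hv : memY v) (p : ℕ) :
    ∃ B : ℝ, 0 < B ∧ ∀ x : ℝ, |iteratedDeriv p v x| ≤ B * Real.exp (-(|x| / 2)) := by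
  obtain ⟨-, -, q, hq⟩ := hv
  obtain ⟨C, hC0, hC⟩ := hq p
  refine ⟨C * (2 * ((q:ℝ) + 1)) ^ q, by positivity, fun x => ?_⟩
  calc |iteratedDeriv p v x| ≤ C * (1 + x ^ 2) ^ ((q : ℝ) / 2) * Real.exp (-|x|) := hC x
    _ ≤ C * ((2 * ((q:ℝ) + 1)) ^ q * Real.exp (|x| / 2)) * Real.exp (-|x|) := by
        apply mul_le_mul_of_nonneg_right _ (Real.exp_nonneg _)
        exact mul_le_mul_of_nonneg_left (poly_le_exp q x) hC0.le
    _ = C * (2 * ((q:ℝ) + 1)) ^ q * (Real.exp (|x| / 2) * Real.exp (-|x|)) := by ring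
    _ = C * (2 * ((q:ℝ) + 1)) ^ q * Real.exp (-(|x| / 2)) := by
        rw [← Real.exp_add]
        congr 2
        ring


/-- Facts about `deriv χ`. -/
lemma chi_deriv_facts {χ : ℝ → ℝ} (hχ : IsCutChi χ) :
    ∃ Mχ : ℝ, 0 < Mχ ∧ (∀ x, |deriv χ x| ≤ Mχ) ∧ (∀ x : ℝ, 1 < |x| → deriv χ x = 0) := by
  obtain ⟨hsm, -, -, hz, ho⟩ := hχ
  have hvan : ∀ x : ℝ, 1 < |x| → deriv χ x = 0 := by
    intro x hx
    have hU : IsOpen {y : ℝ | 1 < |y|} := isOpen_lt continuous_const continuous_abs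
    have heq : χ =ᶠ[nhds x] fun _ => (1:ℝ) :=
      Filter.eventuallyEq_of_mem (hU.mem_nhds hx) (fun y hy => ho y (le_of_lt hy))
    rw [heq.deriv_eq, deriv_const]
  have hcont : Continuous (deriv χ) := hsm.continuous_deriv (by exact_mod_cast le_top)
  have hvan' : ∀ x : ℝ, (1:ℝ) < |x| → deriv χ x = 0 := hvan
  obtain ⟨M, hM0, hM⟩ := bounded_of_compact_support hcont one_pos hvan'
  exact ⟨M, hM0, hM, hvan⟩

/-- All the facts we need about `P x = ∑ cᵢ |x|^i χ x`. -/
lemma P_facts {χ : ℝ → ℝ} (hχ : IsCutChi χ) (k : ℕ) (c : ℕ → ℝ) :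
    ∃ DP : ℝ, 0 < DP ∧
      (∀ x : ℝ, |∑ i ∈ Finset.range (k+1), c i * (|x| ^ i * χ x)| ≤ DP * (1 + |x|) ^ k) ∧
      (∀ x : ℝ, ∃ d : ℝ,
        HasDerivAt (fun z => ∑ i ∈ Finset.range (k+1), c i * (|z| ^ i * χ z)) d x ∧
        |d| ≤ DP * (1 + |x|) ^ (k - 1) ∧ (k = 0 → |d| ≤ DP * Real.exp (-(|x| / 2)))) := by
  obtain ⟨Mχ, hMχ0, hMχ, hMvan⟩ := chi_deriv_facts hχ
  obtain ⟨hsm, -, hr, hz, ho⟩ := hχ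
  have hχdiff : Differentiable ℝ χ := hsm.differentiable (by simp)
  set P : ℝ → ℝ := fun z => ∑ i ∈ Finset.range (k+1), c i * (|z| ^ i * χ z) with hP
  set CP : ℝ := ∑ i ∈ Finset.range (k+1), |c i| with hCP
  have hCP0 : 0 ≤ CP := Finset.sum_nonneg fun i _ => abs_nonneg _
  set DP : ℝ := (CP + 1) * ((k:ℝ) + Mχ + 1) * Real.exp 1 with hDP
  have hexp1 : (1:ℝ) ≤ Real.exp 1 := by
    have := Real.add_one_le_exp (1:ℝ); linarith
  have hDP0 : 0 < DP := by positivity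
  -- the common majorant for the derivative
  set S : ℝ → ℝ := fun x => ∑ i ∈ Finset.range (k+1),
    |c i| * ((i:ℝ) * |x| ^ (i-1) + |x| ^ i * |deriv χ x|) with hS
  -- bound on P itself
  have hPbound : ∀ x : ℝ, |P x| ≤ DP * (1 + |x|) ^ k := by
    intro x
    have h1 : |P x| ≤ ∑ i ∈ Finset.range (k+1), |c i| * (1 + |x|) ^ k := by
      refine le_trans (Finset.abs_sum_le_sum_abs _ _) (Finset.sum_le_sum fun i hi => ?_)
      rw [abs_mul]
      apply mul_le_mul_of_nonneg_left _ (abs_nonneg _)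
      rw [abs_mul, abs_pow, abs_abs]
      calc |x| ^ i * |χ x| ≤ (1 + |x|) ^ i * 1 := by
            apply mul_le_mul (pow_le_pow_left₀ (abs_nonneg x) (by linarith [abs_nonneg x]) i)
              (abs_le.2 ⟨by linarith [(hr x).1], (hr x).2⟩) (abs_nonneg _) (by positivity)
        _ ≤ (1 + |x|) ^ k := by
            rw [mul_one]
            exact pow_le_pow_right₀ (by linarith [abs_nonneg x])
              (Nat.lt_succ_iff.1 (Finset.mem_range.1 hi))
    calc |P x| ≤ ∑ i ∈ Finset.range (k+1), |c i| * (1 + |x|) ^ k := h1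
      _ = CP * (1 + |x|) ^ k := by rw [hCP, ← Finset.sum_mul]
      _ ≤ DP * (1 + |x|) ^ k := by
          apply mul_le_mul_of_nonneg_right _ (by positivity)
          rw [hDP]
          have hA : (1:ℝ) ≤ ((k:ℝ) + Mχ + 1) := by
            have := Nat.cast_nonneg (α := ℝ) k; linarith
          have h2 : CP + 1 ≤ (CP + 1) * ((k:ℝ) + Mχ + 1) :=
            le_mul_of_one_le_right (by linarith) hA
          have h3 : (CP + 1) * ((k:ℝ) + Mχ + 1) ≤ (CP + 1) * ((k:ℝ) + Mχ + 1) * Real.exp 1 :=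
            le_mul_of_one_le_right (by nlinarith) hexp1
          linarith
  -- derivative exists with |d| ≤ S x
  have hPderiv : ∀ x : ℝ, ∃ d : ℝ, HasDerivAt P d x ∧ |d| ≤ S x := by
    intro x
    rcases lt_or_ge |x| (1/2) with hx | hx
    · -- P vanishes near x
      refine ⟨0, ?_, by
        rw [abs_zero, hS]; exact Finset.sum_nonneg fun i _ => by positivity⟩
      have hU : IsOpen {y : ℝ | |y| < 1/2} := isOpen_lt continuous_abs continuous_const
      have heq : P =ᶠ[nhds x] fun _ => (0:ℝ) := by
        refine Filter.eventuallyEq_of_mem (hU.mem_nhds hx) (fun y hy => ?_)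
        have : χ y = 0 := hz y (le_of_lt hy)
        simp [hP, this]
      exact (hasDerivAt_const x (0:ℝ)).congr_of_eventuallyEq heq
    · rcases lt_or_ge 0 x with hx0 | hx0
      · -- positive side
        have hχx : HasDerivAt χ (deriv χ x) x := (hχdiff x).hasDerivAt
        have hQ : HasDerivAt (fun z => ∑ i ∈ Finset.range (k+1), c i * (z ^ i * χ z))
            (∑ i ∈ Finset.range (k+1), c i * ((i:ℝ) * x ^ (i-1) * χ x + x ^ i * deriv χ x)) x :=
          HasDerivAt.fun_sum fun i _ => ((hasDerivAt_pow i x).mul hχx).const_mul (c i)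
        have heq : P =ᶠ[nhds x] fun z => ∑ i ∈ Finset.range (k+1), c i * (z ^ i * χ z) := by
          refine Filter.eventuallyEq_of_mem (isOpen_Ioi.mem_nhds hx0) (fun y hy => ?_)
          have : |y| = y := abs_of_pos hy
          simp [hP, this]
        refine ⟨_, hQ.congr_of_eventuallyEq heq, ?_⟩
        rw [hS]
        refine le_trans (Finset.abs_sum_le_sum_abs _ _) (Finset.sum_le_sum fun i _ => ?_)
        rw [abs_mul]
        apply mul_le_mul_of_nonneg_left _ (abs_nonneg _)
        calc |(i:ℝ) * x ^ (i-1) * χ x + x ^ i * deriv χ x|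
            ≤ |(i:ℝ) * x ^ (i-1) * χ x| + |x ^ i * deriv χ x| := abs_add_le _ _
          _ ≤ (i:ℝ) * |x| ^ (i-1) + |x| ^ i * |deriv χ x| := by
              rw [abs_mul, abs_mul, abs_mul, abs_pow, abs_pow, Nat.abs_cast]
              have h2 : |χ x| ≤ 1 := abs_le.2 ⟨by linarith [(hr x).1], (hr x).2⟩
              have h3 : (i:ℝ) * |x| ^ (i-1) * |χ x| ≤ (i:ℝ) * |x| ^ (i-1) * 1 := by
                apply mul_le_mul_of_nonneg_left h2 (by positivity)
              linarith
      · -- negative side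
        have hxneg : x < 0 := by
          rcases lt_or_ge x 0 with h | h
          · exact h
          · exfalso; rw [abs_of_nonneg h] at hx; linarith
        have hχx : HasDerivAt χ (deriv χ x) x := (hχdiff x).hasDerivAt
        have hpow : ∀ i : ℕ, HasDerivAt (fun z : ℝ => (-z) ^ i)
            (((i:ℝ) * (-x) ^ (i-1)) * (-1)) x := fun i =>
          (hasDerivAt_pow i (-x)).comp x (hasDerivAt_neg x)
        have hQ : HasDerivAt (fun z => ∑ i ∈ Finset.range (k+1), c i * ((-z) ^ i * χ z))
            (∑ i ∈ Finset.range (k+1),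
              c i * ((((i:ℝ) * (-x) ^ (i-1)) * (-1)) * χ x + (-x) ^ i * deriv χ x)) x :=
          HasDerivAt.fun_sum fun i _ => ((hpow i).mul hχx).const_mul (c i)
        have heq : P =ᶠ[nhds x] fun z => ∑ i ∈ Finset.range (k+1), c i * ((-z) ^ i * χ z) := by
          refine Filter.eventuallyEq_of_mem (isOpen_Iio.mem_nhds hxneg) (fun y hy => ?_)
          have : |y| = -y := abs_of_neg hy
          simp [hP, this]
        refine ⟨_, hQ.congr_of_eventuallyEq heq, ?_⟩
        rw [hS]
        refine le_trans (Finset.abs_sum_le_sum_abs _ _) (Finset.sum_le_sum fun i _ => ?_)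
        rw [abs_mul]
        apply mul_le_mul_of_nonneg_left _ (abs_nonneg _)
        calc |(((i:ℝ) * (-x) ^ (i-1)) * (-1)) * χ x + (-x) ^ i * deriv χ x|
            ≤ |(((i:ℝ) * (-x) ^ (i-1)) * (-1)) * χ x| + |(-x) ^ i * deriv χ x| := abs_add_le _ _
          _ ≤ (i:ℝ) * |x| ^ (i-1) + |x| ^ i * |deriv χ x| := by
              rw [abs_mul, abs_mul, abs_mul, abs_mul, abs_pow, abs_pow, abs_neg, Nat.abs_cast,
                abs_neg, abs_one, mul_one]
              have h2 : |χ x| ≤ 1 := abs_le.2 ⟨by linarith [(hr x).1], (hr x).2⟩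
              have h3 : (i:ℝ) * |x| ^ (i-1) * |χ x| ≤ (i:ℝ) * |x| ^ (i-1) * 1 := by
                apply mul_le_mul_of_nonneg_left h2 (by positivity)
              linarith
  -- bound on S, generic
  have hS1 : ∀ x : ℝ, S x ≤ DP * (1 + |x|) ^ (k - 1) := by
    intro x
    have hax : (0:ℝ) ≤ |x| := abs_nonneg x
    have h1x : (1:ℝ) ≤ 1 + |x| := by linarith
    have h1 : S x ≤ ∑ i ∈ Finset.range (k+1), |c i| * (((k:ℝ) + Mχ) * (1 + |x|) ^ (k-1)) := by
      refine Finset.sum_le_sum fun i hi => ?_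
      apply mul_le_mul_of_nonneg_left _ (abs_nonneg _)
      have hik : i ≤ k := Nat.lt_succ_iff.1 (Finset.mem_range.1 hi)
      have ha : (i:ℝ) * |x| ^ (i-1) ≤ (k:ℝ) * (1 + |x|) ^ (k-1) := by
        apply mul_le_mul (by exact_mod_cast hik)
          (le_trans (pow_le_pow_left₀ hax (by linarith) (i-1))
            (pow_le_pow_right₀ h1x (Nat.sub_le_sub_right hik 1)))
          (by positivity) (Nat.cast_nonneg k)
      have hb : |x| ^ i * |deriv χ x| ≤ Mχ * (1 + |x|) ^ (k-1) := by
        rcases le_or_gt |x| 1 with h | h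
        · have hb1 : |x| ^ i * |deriv χ x| ≤ 1 * Mχ :=
            mul_le_mul (pow_le_one₀ hax h) (hMχ x) (abs_nonneg _) one_pos.le
          have hb2 : Mχ * 1 ≤ Mχ * (1 + |x|) ^ (k-1) :=
            mul_le_mul_of_nonneg_left (one_le_pow₀ h1x) hMχ0.le
          calc |x| ^ i * |deriv χ x| ≤ 1 * Mχ := hb1
            _ = Mχ * 1 := by ring
            _ ≤ Mχ * (1 + |x|) ^ (k-1) := hb2
        · rw [hMvan x h]
          simp only [abs_zero, mul_zero]
          positivity
      calc (i:ℝ) * |x| ^ (i-1) + |x| ^ i * |deriv χ x|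
          ≤ (k:ℝ) * (1 + |x|) ^ (k-1) + Mχ * (1 + |x|) ^ (k-1) := add_le_add ha hb
        _ = ((k:ℝ) + Mχ) * (1 + |x|) ^ (k-1) := by ring
    calc S x ≤ ∑ i ∈ Finset.range (k+1), |c i| * (((k:ℝ) + Mχ) * (1 + |x|) ^ (k-1)) := h1
      _ = CP * (((k:ℝ) + Mχ) * (1 + |x|) ^ (k-1)) := by rw [hCP, ← Finset.sum_mul]
      _ = (CP * ((k:ℝ) + Mχ)) * (1 + |x|) ^ (k-1) := by ring
      _ ≤ DP * (1 + |x|) ^ (k-1) := by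
          apply mul_le_mul_of_nonneg_right _ (by positivity)
          rw [hDP]
          have hk0 := Nat.cast_nonneg (α := ℝ) k
          nlinarith [mul_nonneg hCP0 hMχ0.le, mul_nonneg hCP0 hk0]
  -- bound on S for k = 0
  have hS0 : k = 0 → ∀ x : ℝ, S x ≤ DP * Real.exp (-(|x| / 2)) := by
    intro hk x
    subst hk
    have hSx : S x = |c 0| * |deriv χ x| := by
      rw [hS]
      simp [Finset.sum_range_one]
    have hc0 : |c 0| ≤ CP := by
      rw [hCP]; simp [Finset.sum_range_one]
    rcases le_or_gt |x| 1 with h | h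
    · have he : (1:ℝ) ≤ Real.exp 1 * Real.exp (-(|x| / 2)) := by
        rw [← Real.exp_add]
        calc (1:ℝ) = Real.exp 0 := Real.exp_zero.symm
          _ ≤ _ := Real.exp_le_exp.2 (by linarith)
      have h1 : S x ≤ |c 0| * Mχ := by
        rw [hSx]
        exact mul_le_mul_of_nonneg_left (hMχ x) (abs_nonneg _)
      have h2 : |c 0| * Mχ ≤ |c 0| * Mχ * (Real.exp 1 * Real.exp (-(|x| / 2))) :=
        le_mul_of_one_le_right (by positivity) he
      have hfac : |c 0| * Mχ ≤ (CP + 1) * (Mχ + 1) := by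
        nlinarith [hc0, hCP0, hMχ0, abs_nonneg (c 0)]
      have h3 : |c 0| * Mχ * Real.exp 1 ≤ DP := by
        calc |c 0| * Mχ * Real.exp 1 ≤ ((CP + 1) * (Mχ + 1)) * Real.exp 1 :=
              mul_le_mul_of_nonneg_right hfac (Real.exp_nonneg 1)
          _ = DP := by rw [hDP]; push_cast; ring
      calc S x ≤ |c 0| * Mχ * (Real.exp 1 * Real.exp (-(|x| / 2))) := le_trans h1 h2
        _ = (|c 0| * Mχ * Real.exp 1) * Real.exp (-(|x| / 2)) := by ring
        _ ≤ DP * Real.exp (-(|x| / 2)) :=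
            mul_le_mul_of_nonneg_right h3 (Real.exp_nonneg _)
    · rw [hSx, hMvan x h]
      simp only [abs_zero, mul_zero]
      positivity
  refine ⟨DP, hDP0, hPbound, fun x => ?_⟩
  obtain ⟨d, hd, hdS⟩ := hPderiv x
  exact ⟨d, hd, le_trans hdS (hS1 x), fun hk => le_trans hdS (hS0 hk x)⟩


end CutoffEstAux

set_option maxHeartbeats 1000000 in
open CutoffEstAux MeasureTheory Set in
/-- Cut-off estimates against `𝒵ₖ`: for `R ∈ 𝒵ₖ` and `j, k ≥ 0` there is `C` (independent of
`δ, λ, s`) such that, whenever `1/(2s) ≤ λ ≤ min(δ, 2/s)`: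
(a) `‖θ^{(j)}R‖_{L²} ≤ C δ^{1/2+k−j} s^{1/2+k−j}`;
(b) if `j+k ≥ 1` then `‖(θ^{(j)}R)'‖_{L²} ≤ C δ^{−1/2+k−j} s^{−1/2+k−j}`;
(c) if `k = 0` then `‖(θR)'‖_{L²} ≤ C`;
and in particular `‖θ^{(j)}R‖_{H¹} ≤ C δ^{1/2+k−j} s^{1/2+k−j}`. -/
theorem cutoff_estimates_Z (Θ₀ : ℝ → ℝ) (hsm : ContDiff ℝ ∞ Θ₀)
    (heven : ∀ x, Θ₀ (-x) = Θ₀ x) (hrange : ∀ x, Θ₀ x ∈ Set.Icc (0 : ℝ) 1)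
    (hone : ∀ x : ℝ, |x| ≤ 1 → Θ₀ x = 1) (hzero : ∀ x : ℝ, 2 ≤ |x| → Θ₀ x = 0)
    (χ : ℝ → ℝ) (hχ : IsCutChi χ) (j k : ℕ) (R : ℝ → ℝ) (hR : memZ χ k R) :
    ∃ C : ℝ, 0 < C ∧ ∀ δ lam s : ℝ, δ ∈ Set.Ioo (0 : ℝ) 1 → 0 < lam → 1 ≤ s →
      1 / (2 * s) ≤ lam → lam ≤ min δ (2 / s) →
      (Real.sqrt (∫ y : ℝ, (iteratedDeriv j (cutTheta Θ₀ δ lam) y * R y) ^ 2)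
          ≤ C * δ ^ ((1 : ℝ) / 2 + (k : ℝ) - (j : ℝ)) * s ^ ((1 : ℝ) / 2 + (k : ℝ) - (j : ℝ))) ∧
      (1 ≤ j + k →
        Real.sqrt (∫ y : ℝ,
            (deriv (fun z : ℝ => iteratedDeriv j (cutTheta Θ₀ δ lam) z * R z) y) ^ 2)
          ≤ C * δ ^ (-(1 : ℝ) / 2 + (k : ℝ) - (j : ℝ)) *
              s ^ (-(1 : ℝ) / 2 + (k : ℝ) - (j : ℝ))) ∧
      (k = 0 →
        Real.sqrt (∫ y : ℝ, (deriv (fun z : ℝ => cutTheta Θ₀ δ lam z * R z) y) ^ 2) ≤ C) ∧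
      Real.sqrt ((∫ y : ℝ, (iteratedDeriv j (cutTheta Θ₀ δ lam) y * R y) ^ 2) +
          ∫ y : ℝ, (deriv (fun z : ℝ => iteratedDeriv j (cutTheta Θ₀ δ lam) z * R z) y) ^ 2)
        ≤ C * δ ^ ((1 : ℝ) / 2 + (k : ℝ) - (j : ℝ)) * s ^ ((1 : ℝ) / 2 + (k : ℝ) - (j : ℝ)) := by
    classical
  -- facts about Θ₀ and its iterated derivatives
  have hΘcont : ∀ n : ℕ, Continuous (iteratedDeriv n Θ₀) := fun n =>
    hsm.continuous_iteratedDeriv n (by exact_mod_cast le_top)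
  have hΘzero : ∀ (n : ℕ) (x : ℝ), 2 < |x| → iteratedDeriv n Θ₀ x = 0 := by
    intro n x hx
    have hU : IsOpen {y : ℝ | 2 < |y|} := isOpen_lt continuous_const continuous_abs
    have heqon : Set.EqOn Θ₀ (fun _ => (0:ℝ)) {y : ℝ | 2 < |y|} := fun y hy =>
      hzero y (le_of_lt hy)
    have h2 := (heqon.iteratedDeriv_of_isOpen hU n) hx
    rw [h2, iteratedDeriv_zero_fun]
  have hΘone : ∀ n : ℕ, 1 ≤ n → ∀ x : ℝ, |x| < 1 → iteratedDeriv n Θ₀ x = 0 := by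
    intro n hn x hx
    exact iteratedDeriv_eq_zero_of_const_on (isOpen_lt continuous_abs continuous_const)
      (fun y hy => hone y (le_of_lt hy)) hn x hx
  obtain ⟨Mj, hMj0, hMj⟩ := bounded_of_compact_support (hΘcont j) two_pos (hΘzero j)
  obtain ⟨Mj1, hMj10, hMj1⟩ :=
    bounded_of_compact_support (hΘcont (j+1)) two_pos (hΘzero (j+1))
  obtain ⟨M1, hM10, hM1⟩ := bounded_of_compact_support (hΘcont 1) two_pos (hΘzero 1)
  -- decomposition of R
  obtain ⟨v, hv, c, hc⟩ := hR
  obtain ⟨DP, hDP0, hPb, hPd⟩ := P_facts hχ k c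
  obtain ⟨Bv0, hBv00, hBv0⟩ := memY_deriv_bound hv 0
  obtain ⟨Bv1, hBv10, hBv1⟩ := memY_deriv_bound hv 1
  have hvcont : Continuous v := hv.1.continuous
  have hvdiff : ∀ x : ℝ, HasDerivAt v (deriv v x) x := fun x =>
    (hv.1.differentiable (by simp) x).hasDerivAt
  have hvb : ∀ x : ℝ, |v x| ≤ Bv0 * Real.exp (-(|x|/2)) := by
    intro x; have h := hBv0 x; rwa [iteratedDeriv_zero] at h
  have hv1b : ∀ x : ℝ, |deriv v x| ≤ Bv1 * Real.exp (-(|x|/2)) := by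
    intro x; have h := hBv1 x; rwa [iteratedDeriv_one] at h
  have hexp_le_one : ∀ x : ℝ, Real.exp (-(|x|/2)) ≤ 1 := by
    intro x
    calc Real.exp (-(|x|/2)) ≤ Real.exp 0 :=
          Real.exp_le_exp.2 (by have := abs_nonneg x; linarith)
      _ = 1 := Real.exp_zero
  set BR : ℝ := Bv0 + DP with hBRdef
  set BR' : ℝ := Bv1 + DP with hBR'def
  have hBR0 : 0 < BR := by positivity
  have hBR'0 : 0 < BR' := by positivity
  have hRb : ∀ x : ℝ, |R x| ≤ BR * (1 + |x|) ^ k := by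
    intro x
    rw [hc x]
    have h1x : (1:ℝ) ≤ 1 + |x| := by linarith [abs_nonneg x]
    have hv2 : |v x| ≤ Bv0 * (1 + |x|) ^ k := by
      calc |v x| ≤ Bv0 * Real.exp (-(|x|/2)) := hvb x
        _ ≤ Bv0 * 1 := mul_le_mul_of_nonneg_left (hexp_le_one x) hBv00.le
        _ ≤ Bv0 * (1 + |x|) ^ k :=
            mul_le_mul_of_nonneg_left (one_le_pow₀ h1x) hBv00.le
    calc |v x + ∑ i ∈ Finset.range (k+1), c i * (|x| ^ i * χ x)|
        ≤ |v x| + |∑ i ∈ Finset.range (k+1), c i * (|x| ^ i * χ x)| := abs_add_le _ _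
      _ ≤ Bv0 * (1 + |x|) ^ k + DP * (1 + |x|) ^ k := add_le_add hv2 (hPb x)
      _ = BR * (1 + |x|) ^ k := by rw [hBRdef]; ring
  have hRcont : Continuous R := by
    have h : Continuous fun x : ℝ => v x + ∑ i ∈ Finset.range (k+1), c i * (|x| ^ i * χ x) :=
      hvcont.add (continuous_finset_sum _ fun i _ =>
        continuous_const.mul ((continuous_abs.pow i).mul hχ.1.continuous))
    exact (funext hc : R = _) ▸ h
  have hRder : ∀ x : ℝ, HasDerivAt R (deriv R x) x ∧
      |deriv R x| ≤ BR' * (1 + |x|) ^ (k-1) ∧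
      (k = 0 → |deriv R x| ≤ BR' * Real.exp (-(|x|/2))) := by
    intro x
    obtain ⟨d, hd, hd1, hd0⟩ := hPd x
    have hsum : HasDerivAt R (deriv v x + d) x := by
      have h := (hvdiff x).add hd
      exact h.congr_of_eventuallyEq (Filter.Eventually.of_forall fun y => hc y)
    have hdR : deriv R x = deriv v x + d := hsum.deriv
    have h1x : (1:ℝ) ≤ 1 + |x| := by linarith [abs_nonneg x]
    refine ⟨hdR ▸ hsum, ?_, ?_⟩
    · rw [hdR]
      have hv2 : |deriv v x| ≤ Bv1 * (1 + |x|) ^ (k-1) := by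
        calc |deriv v x| ≤ Bv1 * Real.exp (-(|x|/2)) := hv1b x
          _ ≤ Bv1 * 1 := mul_le_mul_of_nonneg_left (hexp_le_one x) hBv10.le
          _ ≤ Bv1 * (1 + |x|) ^ (k-1) :=
              mul_le_mul_of_nonneg_left (one_le_pow₀ h1x) hBv10.le
      calc |deriv v x + d| ≤ |deriv v x| + |d| := abs_add_le _ _
        _ ≤ Bv1 * (1 + |x|) ^ (k-1) + DP * (1 + |x|) ^ (k-1) := add_le_add hv2 hd1
        _ = BR' * (1 + |x|) ^ (k-1) := by rw [hBR'def]; ring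
    · intro hk0
      rw [hdR]
      calc |deriv v x + d| ≤ |deriv v x| + |d| := abs_add_le _ _
        _ ≤ Bv1 * Real.exp (-(|x|/2)) + DP * Real.exp (-(|x|/2)) :=
            add_le_add (hv1b x) (hd0 hk0)
        _ = BR' * Real.exp (-(|x|/2)) := by rw [hBR'def]; ring
  -- the constants
  set Ca : ℝ := Mj * (BR * 3 ^ k) * 2 ^ (j + k + 2) with hCadef
  set CB : ℝ := Mj1 * (BR * 3 ^ k) * 2 ^ ((j+1) + k + 2)
      + Mj * (BR' * 3 ^ (k-1)) * 2 ^ (j + (k-1) + 2)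
      + (16 * (Mj * BR')) * 2 ^ ((j+1) + 0 + 2) with hCBdef
  set CG : ℝ := Real.sqrt (∫ y : ℝ, (BR' * Real.exp (-(|y|/2))) ^ 2) with hCGdef
  set Cc : ℝ := Real.sqrt 2 * (2 * (M1 * BR)) + Real.sqrt 2 * CG + 1 with hCcdef
  set CH : ℝ := Ca + 2 * CB + 2 * Cc with hCHdef
  have hCa0 : 0 ≤ Ca := by
    rw [hCadef]
    exact mul_nonneg (mul_nonneg hMj0.le (by positivity)) (by positivity)
  have hCB0 : 0 ≤ CB := by
    rw [hCBdef]
    have h1 : (0:ℝ) ≤ Mj1 * (BR * 3 ^ k) * 2 ^ ((j+1) + k + 2) :=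
      mul_nonneg (mul_nonneg hMj10.le (by positivity)) (by positivity)
    have h2 : (0:ℝ) ≤ Mj * (BR' * 3 ^ (k-1)) * 2 ^ (j + (k-1) + 2) :=
      mul_nonneg (mul_nonneg hMj0.le (by positivity)) (by positivity)
    have h3 : (0:ℝ) ≤ (16 * (Mj * BR')) * 2 ^ ((j+1) + 0 + 2) :=
      mul_nonneg (by positivity) (by positivity)
    linarith
  have hCG0 : 0 ≤ CG := by rw [hCGdef]; exact Real.sqrt_nonneg _
  have hCc0 : 0 ≤ Cc := by
    rw [hCcdef]
    have h1 : (0:ℝ) ≤ Real.sqrt 2 * (2 * (M1 * BR)) := by positivity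
    have h2 : (0:ℝ) ≤ Real.sqrt 2 * CG := mul_nonneg (Real.sqrt_nonneg 2) hCG0
    linarith
  have hCH0 : 0 ≤ CH := by rw [hCHdef]; linarith
  refine ⟨Ca + CB + Cc + CH + 1, by linarith, ?_⟩
  set C : ℝ := Ca + CB + Cc + CH + 1 with hCdef
  intro δ lam s hδmem hlam hs hlam1 hlam2
  obtain ⟨hδ0, hδ1⟩ := hδmem
  have hs0 : 0 < s := lt_of_lt_of_le one_pos hs
  have hlamδ : lam ≤ δ := le_trans hlam2 (min_le_left _ _)
  have hlams : lam ≤ 2 / s := le_trans hlam2 (min_le_right _ _)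
  set t : ℝ := δ / lam with htdef
  have ht0 : 0 < t := div_pos hδ0 hlam
  have ht1 : 1 ≤ t := (one_le_div hlam).2 hlamδ
  set u : ℝ := δ * s with hudef
  have hu0 : 0 < u := mul_pos hδ0 hs0
  have hu12 : 1/2 ≤ u := by
    have h1 : 1/(2*s) ≤ δ := le_trans hlam1 hlamδ
    have h2 := mul_le_mul_of_nonneg_right h1 hs0.le
    rw [hudef]
    calc (1:ℝ)/2 = 1/(2*s) * s := by field_simp
      _ ≤ δ * s := h2
  have htu1 : u / 2 ≤ t := by
    have h2s : 0 < 2/s := by positivity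
    have h := div_le_div_of_nonneg_left hδ0.le hlam hlams
    calc u / 2 = δ / (2/s) := by rw [hudef]; field_simp
      _ ≤ δ / lam := h
  have htu2 : t ≤ 2 * u := by
    have h2s : 0 < 1/(2*s) := by positivity
    have h := div_le_div_of_nonneg_left hδ0.le h2s hlam1
    calc t = δ / lam := htdef
      _ ≤ δ / (1/(2*s)) := h
      _ = 2 * u := by rw [hudef]; field_simp
  -- the rescaled cut-off
  set b : ℝ := lam / δ with hbdef
  have hbpos : 0 < b := div_pos hlam hδ0
  have hbinv : t⁻¹ = b := by rw [htdef, inv_div]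
  have hθeq : cutTheta Θ₀ δ lam = fun y => Θ₀ (b * y) := by
    funext y
    rw [cutTheta, hbdef]
    congr 1
    ring
  have hθsm : ContDiff ℝ ∞ (cutTheta Θ₀ δ lam) := by
    rw [hθeq]
    exact hsm.comp (contDiff_const.mul contDiff_id)
  have hiD : ∀ n : ℕ, iteratedDeriv n (cutTheta Θ₀ δ lam) =
      fun y => b ^ n * iteratedDeriv n Θ₀ (b * y) := by
    intro n
    rw [hθeq]
    exact iteratedDeriv_comp_const_mul (hsm.of_le (by exact_mod_cast le_top)) b
  have hθiDcont : ∀ n : ℕ, Continuous (iteratedDeriv n (cutTheta Θ₀ δ lam)) := by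
    intro n
    rw [hiD n]
    exact continuous_const.mul ((hΘcont n).comp (continuous_const.mul continuous_id))
  have hθsupp : ∀ (n : ℕ) (y : ℝ), 2 * t < |y| →
      iteratedDeriv n (cutTheta Θ₀ δ lam) y = 0 := by
    intro n y hy
    rw [hiD n]
    have h2 : 2 < |b * y| := by
      rw [abs_mul, abs_of_pos hbpos, ← hbinv]
      have h := mul_lt_mul_of_pos_left hy (inv_pos.2 ht0)
      rwa [show t⁻¹ * (2*t) = 2 by field_simp] at h
    simp only [hΘzero n _ h2, mul_zero]
  have hθsupp1 : ∀ (n : ℕ), 1 ≤ n → ∀ (y : ℝ), |y| < t →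
      iteratedDeriv n (cutTheta Θ₀ δ lam) y = 0 := by
    intro n hn y hy
    rw [hiD n]
    have h2 : |b * y| < 1 := by
      rw [abs_mul, abs_of_pos hbpos, ← hbinv]
      have h := mul_lt_mul_of_pos_left hy (inv_pos.2 ht0)
      rwa [inv_mul_cancel₀ ht0.ne'] at h
    simp only [hΘone n hn _ h2, mul_zero]
  have hθbd : ∀ (n : ℕ) (M : ℝ), (∀ x, |iteratedDeriv n Θ₀ x| ≤ M) →
      ∀ y : ℝ, |iteratedDeriv n (cutTheta Θ₀ δ lam) y| ≤ t⁻¹ ^ n * M := by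
    intro n M hM y
    rw [hiD n]
    simp only
    rw [abs_mul, abs_pow, abs_of_pos hbpos, hbinv]
    exact mul_le_mul_of_nonneg_left (hM _) (by positivity)
  -- the final conversion
  have hfin : ∀ (X K : ℝ) (e : ℝ), 0 ≤ K → K ≤ C → X ≤ K * u ^ e →
      X ≤ C * δ ^ e * s ^ e := by
    intro X K e hK0 hKC hX
    calc X ≤ K * u ^ e := hX
      _ ≤ C * u ^ e := mul_le_mul_of_nonneg_right hKC (Real.rpow_nonneg hu0.le e)
      _ = C * δ ^ e * s ^ e := by
          rw [hudef, Real.mul_rpow hδ0.le hs0.le, ← mul_assoc]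
  have hA0 : (0:ℝ) < 2 * t := by linarith
  -- part (a)
  have hKa0 : (0:ℝ) ≤ Mj * (BR * 3 ^ k) := mul_nonneg hMj0.le (by positivity)
  have hDa : ∀ y : ℝ, |iteratedDeriv j (cutTheta Θ₀ δ lam) y * R y| ≤
      (Mj * (BR * 3 ^ k)) * (t⁻¹ ^ j * t ^ k) := by
    intro y
    rcases le_or_gt |y| (2*t) with hy | hy
    · rw [abs_mul]
      have h1 : |iteratedDeriv j (cutTheta Θ₀ δ lam) y| ≤ t⁻¹ ^ j * Mj := hθbd j Mj hMj y
      have h2 : |R y| ≤ BR * (3 ^ k * t ^ k) := by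
        calc |R y| ≤ BR * (1 + |y|) ^ k := hRb y
          _ ≤ BR * (3 * t) ^ k := by
              apply mul_le_mul_of_nonneg_left
                (pow_le_pow_left₀ (by linarith [abs_nonneg y]) (by linarith) k) hBR0.le
          _ = BR * (3 ^ k * t ^ k) := by rw [mul_pow]
      calc |iteratedDeriv j (cutTheta Θ₀ δ lam) y| * |R y|
          ≤ (t⁻¹ ^ j * Mj) * (BR * (3 ^ k * t ^ k)) :=
            mul_le_mul h1 h2 (abs_nonneg _) (by positivity)
        _ = (Mj * (BR * 3 ^ k)) * (t⁻¹ ^ j * t ^ k) := by ring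
    · rw [hθsupp j y hy, zero_mul, abs_zero]
      positivity
  have hsuppa : ∀ y : ℝ, 2*t < |y| → iteratedDeriv j (cutTheta Θ₀ δ lam) y * R y = 0 :=
    fun y hy => by rw [hθsupp j y hy, zero_mul]
  have hmA : MeasureTheory.AEStronglyMeasurable
      (fun y : ℝ => iteratedDeriv j (cutTheta Θ₀ δ lam) y * R y) MeasureTheory.volume :=
    ((hθiDcont j).mul hRcont).aestronglyMeasurable
  have partA : Real.sqrt (∫ y : ℝ, (iteratedDeriv j (cutTheta Θ₀ δ lam) y * R y) ^ 2)
      ≤ Ca * u ^ ((1:ℝ)/2 + (k:ℝ) - (j:ℝ)) := by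
    calc Real.sqrt (∫ y : ℝ, (iteratedDeriv j (cutTheta Θ₀ δ lam) y * R y) ^ 2)
        ≤ ((Mj * (BR * 3 ^ k)) * (t⁻¹ ^ j * t ^ k)) * Real.sqrt (2 * (2 * t)) :=
          l2_bound hmA (by positivity) hA0 hDa hsuppa
      _ ≤ Mj * (BR * 3 ^ k) * 2 ^ (j + k + 2) * u ^ ((1:ℝ)/2 + (k:ℝ) - (j:ℝ)) :=
          key_bound ht1 hu12 htu1 htu2 j k hKa0
      _ = Ca * u ^ ((1:ℝ)/2 + (k:ℝ) - (j:ℝ)) := by rw [hCadef]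
  -- derivative of the product
  have hhd : ∀ y : ℝ, HasDerivAt (iteratedDeriv j (cutTheta Θ₀ δ lam))
      (iteratedDeriv (j+1) (cutTheta Θ₀ δ lam) y) y := by
    intro y
    rw [iteratedDeriv_succ]
    exact ((hθsm.differentiable_iteratedDeriv j
      (by exact_mod_cast lt_top_iff_ne_top.2 (by simp))) y).hasDerivAt
  have hder : ∀ y : ℝ, deriv (fun z : ℝ => iteratedDeriv j (cutTheta Θ₀ δ lam) z * R z) y
      = iteratedDeriv (j+1) (cutTheta Θ₀ δ lam) y * R y
        + iteratedDeriv j (cutTheta Θ₀ δ lam) y * deriv R y := fun y =>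
    ((hhd y).mul (hRder y).1).deriv
  have hmB : MeasureTheory.AEStronglyMeasurable
      (fun y : ℝ => deriv (fun z : ℝ => iteratedDeriv j (cutTheta Θ₀ δ lam) z * R z) y)
      MeasureTheory.volume := (measurable_deriv _).aestronglyMeasurable
  have hterm1 : ∀ y : ℝ, |iteratedDeriv (j+1) (cutTheta Θ₀ δ lam) y * R y| ≤
      (Mj1 * (BR * 3 ^ k)) * (t⁻¹ ^ (j+1) * t ^ k) := by
    intro y
    rcases le_or_gt |y| (2*t) with hy | hy
    · rw [abs_mul]
      have h1 : |iteratedDeriv (j+1) (cutTheta Θ₀ δ lam) y| ≤ t⁻¹ ^ (j+1) * Mj1 :=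
        hθbd (j+1) Mj1 hMj1 y
      have h2 : |R y| ≤ BR * (3 ^ k * t ^ k) := by
        calc |R y| ≤ BR * (1 + |y|) ^ k := hRb y
          _ ≤ BR * (3 * t) ^ k := by
              apply mul_le_mul_of_nonneg_left
                (pow_le_pow_left₀ (by linarith [abs_nonneg y]) (by linarith) k) hBR0.le
          _ = BR * (3 ^ k * t ^ k) := by rw [mul_pow]
      calc |iteratedDeriv (j+1) (cutTheta Θ₀ δ lam) y| * |R y|
          ≤ (t⁻¹ ^ (j+1) * Mj1) * (BR * (3 ^ k * t ^ k)) :=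
            mul_le_mul h1 h2 (abs_nonneg _) (by positivity)
        _ = (Mj1 * (BR * 3 ^ k)) * (t⁻¹ ^ (j+1) * t ^ k) := by ring
    · rw [hθsupp (j+1) y hy, zero_mul, abs_zero]
      positivity
  have hKb1 : (0:ℝ) ≤ Mj1 * (BR * 3 ^ k) := mul_nonneg hMj10.le (by positivity)
  have hsuppB : ∀ y : ℝ, 2*t < |y| →
      deriv (fun z : ℝ => iteratedDeriv j (cutTheta Θ₀ δ lam) z * R z) y = 0 := by
    intro y hy
    rw [hder y, hθsupp (j+1) y hy, hθsupp j y hy, zero_mul, zero_mul, add_zero]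
  -- part (b)
  have partB : 1 ≤ j + k →
      Real.sqrt (∫ y : ℝ,
          (deriv (fun z : ℝ => iteratedDeriv j (cutTheta Θ₀ δ lam) z * R z) y) ^ 2)
        ≤ CB * u ^ (-(1:ℝ)/2 + (k:ℝ) - (j:ℝ)) := by
    intro hjk
    rcases Nat.eq_zero_or_pos k with hk0 | hk1
    · -- k = 0, hence j ≥ 1
      have hj1 : 1 ≤ j := by omega
      have hterm2 : ∀ y : ℝ, |iteratedDeriv j (cutTheta Θ₀ δ lam) y * deriv R y| ≤
          (16 * (Mj * BR')) * (t⁻¹ ^ (j+1) * t ^ 0) := by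
        intro y
        rcases lt_or_ge |y| t with hy | hy
        · rw [hθsupp1 j hj1 y hy, zero_mul, abs_zero]
          positivity
        · rw [abs_mul]
          have h1 : |iteratedDeriv j (cutTheta Θ₀ δ lam) y| ≤ t⁻¹ ^ j * Mj := hθbd j Mj hMj y
          have h2 : |deriv R y| ≤ BR' * Real.exp (-(t/2)) := by
            calc |deriv R y| ≤ BR' * Real.exp (-(|y|/2)) := (hRder y).2.2 hk0
              _ ≤ BR' * Real.exp (-(t/2)) :=
                  mul_le_mul_of_nonneg_left (Real.exp_le_exp.2 (by linarith)) hBR'0.le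
          calc |iteratedDeriv j (cutTheta Θ₀ δ lam) y| * |deriv R y|
              ≤ (t⁻¹ ^ j * Mj) * (BR' * Real.exp (-(t/2))) :=
                mul_le_mul h1 h2 (abs_nonneg _) (by positivity)
            _ ≤ (t⁻¹ ^ j * Mj) * (BR' * (16 * t⁻¹ ^ 2)) := by
                apply mul_le_mul_of_nonneg_left
                  (mul_le_mul_of_nonneg_left (exp_neg_half_le t ht1) hBR'0.le) (by positivity)
            _ = (16 * (Mj * BR')) * (t⁻¹ ^ (j+2) * t ^ 0) := by
                rw [pow_zero]
                ring
            _ ≤ (16 * (Mj * BR')) * (t⁻¹ ^ (j+1) * t ^ 0) := by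
                apply mul_le_mul_of_nonneg_left _ (by positivity)
                rw [pow_zero, mul_one, mul_one]
                exact pow_le_pow_of_le_one (by positivity) (inv_le_one_of_one_le₀ ht1)
                  (by omega)
      have hDb : ∀ y : ℝ,
          |deriv (fun z : ℝ => iteratedDeriv j (cutTheta Θ₀ δ lam) z * R z) y| ≤
          (Mj1 * (BR * 3 ^ k)) * (t⁻¹ ^ (j+1) * t ^ k)
            + (16 * (Mj * BR')) * (t⁻¹ ^ (j+1) * t ^ 0) := by
        intro y
        rw [hder y]
        calc |iteratedDeriv (j+1) (cutTheta Θ₀ δ lam) y * R y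
              + iteratedDeriv j (cutTheta Θ₀ δ lam) y * deriv R y|
            ≤ |iteratedDeriv (j+1) (cutTheta Θ₀ δ lam) y * R y|
              + |iteratedDeriv j (cutTheta Θ₀ δ lam) y * deriv R y| := abs_add_le _ _
          _ ≤ _ := add_le_add (hterm1 y) (hterm2 y)
      have hstep := l2_bound hmB (D := (Mj1 * (BR * 3 ^ k)) * (t⁻¹ ^ (j+1) * t ^ k)
          + (16 * (Mj * BR')) * (t⁻¹ ^ (j+1) * t ^ 0)) (A := 2*t)
        (by positivity) hA0 hDb hsuppB
      have hkb1 := key_bound ht1 hu12 htu1 htu2 (j+1) k hKb1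
      have hkb2 := key_bound ht1 hu12 htu1 htu2 (j+1) 0
        (show (0:ℝ) ≤ 16 * (Mj * BR') by positivity)
      have he1 : (1:ℝ)/2 + (k:ℝ) - ((j+1:ℕ):ℝ) = -(1:ℝ)/2 + (k:ℝ) - (j:ℝ) := by
        push_cast; ring
      have he2 : (1:ℝ)/2 + ((0:ℕ):ℝ) - ((j+1:ℕ):ℝ) = -(1:ℝ)/2 + (k:ℝ) - (j:ℝ) := by
        rw [hk0]; push_cast; ring
      rw [he1] at hkb1
      rw [he2] at hkb2
      calc Real.sqrt (∫ y : ℝ,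
            (deriv (fun z : ℝ => iteratedDeriv j (cutTheta Θ₀ δ lam) z * R z) y) ^ 2)
          ≤ ((Mj1 * (BR * 3 ^ k)) * (t⁻¹ ^ (j+1) * t ^ k)
              + (16 * (Mj * BR')) * (t⁻¹ ^ (j+1) * t ^ 0)) * Real.sqrt (2 * (2 * t)) := hstep
        _ = (Mj1 * (BR * 3 ^ k)) * (t⁻¹ ^ (j+1) * t ^ k) * Real.sqrt (2 * (2 * t))
            + (16 * (Mj * BR')) * (t⁻¹ ^ (j+1) * t ^ 0) * Real.sqrt (2 * (2 * t)) := by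
            ring
        _ ≤ Mj1 * (BR * 3 ^ k) * 2 ^ ((j+1) + k + 2) * u ^ (-(1:ℝ)/2 + (k:ℝ) - (j:ℝ))
            + 16 * (Mj * BR') * 2 ^ ((j+1) + 0 + 2) * u ^ (-(1:ℝ)/2 + (k:ℝ) - (j:ℝ)) :=
            add_le_add hkb1 hkb2
        _ ≤ CB * u ^ (-(1:ℝ)/2 + (k:ℝ) - (j:ℝ)) := by
            rw [hCBdef, add_mul, add_mul]
            have hup : (0:ℝ) ≤ u ^ (-(1:ℝ)/2 + (k:ℝ) - (j:ℝ)) := Real.rpow_nonneg hu0.le _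
            have h2 : (0:ℝ) ≤ Mj * (BR' * 3 ^ (k-1)) * 2 ^ (j + (k-1) + 2) :=
              mul_nonneg (mul_nonneg hMj0.le (by positivity)) (by positivity)
            linarith [mul_nonneg h2 hup]
    · -- k ≥ 1
      have hterm2 : ∀ y : ℝ, |iteratedDeriv j (cutTheta Θ₀ δ lam) y * deriv R y| ≤
          (Mj * (BR' * 3 ^ (k-1))) * (t⁻¹ ^ j * t ^ (k-1)) := by
        intro y
        rcases le_or_gt |y| (2*t) with hy | hy
        · rw [abs_mul]
          have h1 : |iteratedDeriv j (cutTheta Θ₀ δ lam) y| ≤ t⁻¹ ^ j * Mj := hθbd j Mj hMj y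
          have h2 : |deriv R y| ≤ BR' * (3 ^ (k-1) * t ^ (k-1)) := by
            calc |deriv R y| ≤ BR' * (1 + |y|) ^ (k-1) := (hRder y).2.1
              _ ≤ BR' * (3 * t) ^ (k-1) := by
                  apply mul_le_mul_of_nonneg_left
                    (pow_le_pow_left₀ (by linarith [abs_nonneg y]) (by linarith) (k-1)) hBR'0.le
              _ = BR' * (3 ^ (k-1) * t ^ (k-1)) := by rw [mul_pow]
          calc |iteratedDeriv j (cutTheta Θ₀ δ lam) y| * |deriv R y|
              ≤ (t⁻¹ ^ j * Mj) * (BR' * (3 ^ (k-1) * t ^ (k-1))) :=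
                mul_le_mul h1 h2 (abs_nonneg _) (by positivity)
            _ = (Mj * (BR' * 3 ^ (k-1))) * (t⁻¹ ^ j * t ^ (k-1)) := by ring
        · rw [hθsupp j y hy, zero_mul, abs_zero]
          positivity
      have hDb : ∀ y : ℝ,
          |deriv (fun z : ℝ => iteratedDeriv j (cutTheta Θ₀ δ lam) z * R z) y| ≤
          (Mj1 * (BR * 3 ^ k)) * (t⁻¹ ^ (j+1) * t ^ k)
            + (Mj * (BR' * 3 ^ (k-1))) * (t⁻¹ ^ j * t ^ (k-1)) := by
        intro y
        rw [hder y]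
        calc |iteratedDeriv (j+1) (cutTheta Θ₀ δ lam) y * R y
              + iteratedDeriv j (cutTheta Θ₀ δ lam) y * deriv R y|
            ≤ |iteratedDeriv (j+1) (cutTheta Θ₀ δ lam) y * R y|
              + |iteratedDeriv j (cutTheta Θ₀ δ lam) y * deriv R y| := abs_add_le _ _
          _ ≤ _ := add_le_add (hterm1 y) (hterm2 y)
      have hstep := l2_bound hmB (D := (Mj1 * (BR * 3 ^ k)) * (t⁻¹ ^ (j+1) * t ^ k)
          + (Mj * (BR' * 3 ^ (k-1))) * (t⁻¹ ^ j * t ^ (k-1))) (A := 2*t)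
        (by positivity) hA0 hDb hsuppB
      have hkb1 := key_bound ht1 hu12 htu1 htu2 (j+1) k hKb1
      have hkb2 := key_bound ht1 hu12 htu1 htu2 j (k-1)
        (show (0:ℝ) ≤ Mj * (BR' * 3 ^ (k-1)) from mul_nonneg hMj0.le (by positivity))
      have he1 : (1:ℝ)/2 + (k:ℝ) - ((j+1:ℕ):ℝ) = -(1:ℝ)/2 + (k:ℝ) - (j:ℝ) := by
        push_cast; ring
      have he2 : (1:ℝ)/2 + ((k-1:ℕ):ℝ) - (j:ℝ) = -(1:ℝ)/2 + (k:ℝ) - (j:ℝ) := by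
        rw [Nat.cast_sub hk1]
        push_cast; ring
      rw [he1] at hkb1
      rw [he2] at hkb2
      calc Real.sqrt (∫ y : ℝ,
            (deriv (fun z : ℝ => iteratedDeriv j (cutTheta Θ₀ δ lam) z * R z) y) ^ 2)
          ≤ ((Mj1 * (BR * 3 ^ k)) * (t⁻¹ ^ (j+1) * t ^ k)
              + (Mj * (BR' * 3 ^ (k-1))) * (t⁻¹ ^ j * t ^ (k-1))) * Real.sqrt (2 * (2 * t)) :=
            hstep
        _ = (Mj1 * (BR * 3 ^ k)) * (t⁻¹ ^ (j+1) * t ^ k) * Real.sqrt (2 * (2 * t))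
            + (Mj * (BR' * 3 ^ (k-1))) * (t⁻¹ ^ j * t ^ (k-1)) * Real.sqrt (2 * (2 * t)) := by
            ring
        _ ≤ Mj1 * (BR * 3 ^ k) * 2 ^ ((j+1) + k + 2) * u ^ (-(1:ℝ)/2 + (k:ℝ) - (j:ℝ))
            + Mj * (BR' * 3 ^ (k-1)) * 2 ^ (j + (k-1) + 2) * u ^ (-(1:ℝ)/2 + (k:ℝ) - (j:ℝ)) :=
            add_le_add hkb1 hkb2
        _ ≤ CB * u ^ (-(1:ℝ)/2 + (k:ℝ) - (j:ℝ)) := by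
            rw [hCBdef, add_mul, add_mul]
            have hup : (0:ℝ) ≤ u ^ (-(1:ℝ)/2 + (k:ℝ) - (j:ℝ)) := Real.rpow_nonneg hu0.le _
            have h3 : (0:ℝ) ≤ (16 * (Mj * BR')) * 2 ^ ((j+1) + 0 + 2) :=
              mul_nonneg (by positivity) (by positivity)
            linarith [mul_nonneg h3 hup]
  -- part (c)
  have partC : k = 0 →
      Real.sqrt (∫ y : ℝ, (deriv (fun z : ℝ => cutTheta Θ₀ δ lam z * R z) y) ^ 2) ≤ Cc := by
    intro hk0
    have hderc : ∀ y : ℝ, deriv (fun z : ℝ => cutTheta Θ₀ δ lam z * R z) y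
        = deriv (cutTheta Θ₀ δ lam) y * R y + cutTheta Θ₀ δ lam y * deriv R y := fun y =>
      (((hθsm.differentiable (by simp) y).hasDerivAt).mul (hRder y).1).deriv
    have hd1 : deriv (cutTheta Θ₀ δ lam) = iteratedDeriv 1 (cutTheta Θ₀ δ lam) :=
      iteratedDeriv_one.symm
    have ha1m : MeasureTheory.AEStronglyMeasurable
        (fun y : ℝ => deriv (cutTheta Θ₀ δ lam) y * R y) MeasureTheory.volume := by
      rw [hd1]
      exact ((hθiDcont 1).mul hRcont).aestronglyMeasurable
    have ha1b : ∀ y : ℝ, |deriv (cutTheta Θ₀ δ lam) y * R y| ≤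
        (M1 * BR) * (t⁻¹ ^ 1 * t ^ 0) := by
      intro y
      rw [hd1]
      rcases le_or_gt |y| (2*t) with hy | hy
      · rw [abs_mul]
        have h1 : |iteratedDeriv 1 (cutTheta Θ₀ δ lam) y| ≤ t⁻¹ ^ 1 * M1 := hθbd 1 M1 hM1 y
        have h2 : |R y| ≤ BR := by
          have h := hRb y
          rwa [hk0, pow_zero, mul_one] at h
        calc |iteratedDeriv 1 (cutTheta Θ₀ δ lam) y| * |R y| ≤ (t⁻¹ ^ 1 * M1) * BR :=
              mul_le_mul h1 h2 (abs_nonneg _) (by positivity)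
          _ = (M1 * BR) * (t⁻¹ ^ 1 * t ^ 0) := by rw [pow_zero]; ring
      · rw [hθsupp 1 y hy, zero_mul, abs_zero]
        positivity
    have ha1supp : ∀ y : ℝ, 2*t < |y| → deriv (cutTheta Θ₀ δ lam) y * R y = 0 := by
      intro y hy
      rw [hd1, hθsupp 1 y hy, zero_mul]
    obtain ⟨ha1int, -⟩ := int_sq_le_of_bound ha1m (by positivity) hA0 ha1b ha1supp
    have ha1sqrt : Real.sqrt (∫ y : ℝ, (deriv (cutTheta Θ₀ δ lam) y * R y) ^ 2) ≤
        2 * (M1 * BR) := by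
      have h1 := l2_bound ha1m (by positivity) hA0 ha1b ha1supp
      have hsq : Real.sqrt (2 * (2 * t)) ≤ 2 * t := by
        have h2 : Real.sqrt (2 * (2 * t)) = 2 * Real.sqrt t := by
          rw [show (2:ℝ) * (2 * t) = 4 * t by ring, Real.sqrt_mul (by norm_num : (0:ℝ) ≤ 4),
            show Real.sqrt 4 = 2 by
              rw [show (4:ℝ) = 2 ^ 2 by norm_num]; exact Real.sqrt_sq (by norm_num)]
        rw [h2]
        have h3 : Real.sqrt t ≤ t := by
          calc Real.sqrt t ≤ Real.sqrt (t ^ 2) := Real.sqrt_le_sqrt (le_self_pow₀ (by linarith) (by norm_num))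
            _ = t := Real.sqrt_sq ht0.le
        linarith
      calc Real.sqrt (∫ y : ℝ, (deriv (cutTheta Θ₀ δ lam) y * R y) ^ 2)
          ≤ ((M1 * BR) * (t⁻¹ ^ 1 * t ^ 0)) * Real.sqrt (2 * (2 * t)) := h1
        _ ≤ ((M1 * BR) * (t⁻¹ ^ 1 * t ^ 0)) * (2 * t) := by
            apply mul_le_mul_of_nonneg_left hsq (by positivity)
        _ = 2 * (M1 * BR) * (t⁻¹ * t) := by rw [pow_zero, pow_one]; ring
        _ = 2 * (M1 * BR) := by rw [inv_mul_cancel₀ ht0.ne', mul_one]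
    have ha2m : MeasureTheory.AEStronglyMeasurable
        (fun y : ℝ => cutTheta Θ₀ δ lam y * deriv R y) MeasureTheory.volume :=
      (hθsm.continuous.aestronglyMeasurable).mul (measurable_deriv _).aestronglyMeasurable
    have ha2b : ∀ y : ℝ, |cutTheta Θ₀ δ lam y * deriv R y| ≤ BR' * Real.exp (-(|y|/2)) := by
      intro y
      rw [abs_mul]
      have h1 : |cutTheta Θ₀ δ lam y| ≤ 1 := by
        rw [hθeq]
        exact abs_le.2 ⟨by linarith [(hrange (b*y)).1], (hrange (b*y)).2⟩
      calc |cutTheta Θ₀ δ lam y| * |deriv R y| ≤ 1 * (BR' * Real.exp (-(|y|/2))) :=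
            mul_le_mul h1 ((hRder y).2.2 hk0) (abs_nonneg _) one_pos.le
        _ = BR' * Real.exp (-(|y|/2)) := one_mul _
    have hG2int : MeasureTheory.Integrable (fun y : ℝ => (BR' * Real.exp (-(|y|/2))) ^ 2) := by
      have heq2 : (fun y : ℝ => (BR' * Real.exp (-(|y|/2))) ^ 2)
          = fun y : ℝ => BR' ^ 2 * Real.exp (-|y|) := by
        funext y
        rw [mul_pow, ← Real.exp_nat_mul]
        congr 2
        push_cast
        ring
      rw [heq2]
      exact integrable_exp_neg_abs.const_mul _
    obtain ⟨ha2int, ha2le⟩ := int_sq_le_of_dom ha2m hG2int ha2b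
    have ha2sqrt : Real.sqrt (∫ y : ℝ, (cutTheta Θ₀ δ lam y * deriv R y) ^ 2) ≤ CG := by
      rw [hCGdef]
      exact Real.sqrt_le_sqrt ha2le
    have hmC : MeasureTheory.AEStronglyMeasurable
        (fun y : ℝ => deriv (fun z : ℝ => cutTheta Θ₀ δ lam z * R z) y)
        MeasureTheory.volume := (measurable_deriv _).aestronglyMeasurable
    have hsplit := sqrt_int_split hmC hderc ha1int ha2int
    calc Real.sqrt (∫ y : ℝ, (deriv (fun z : ℝ => cutTheta Θ₀ δ lam z * R z) y) ^ 2)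
        ≤ Real.sqrt 2 * Real.sqrt (∫ y : ℝ, (deriv (cutTheta Θ₀ δ lam) y * R y) ^ 2)
          + Real.sqrt 2 * Real.sqrt (∫ y : ℝ, (cutTheta Θ₀ δ lam y * deriv R y) ^ 2) := hsplit
      _ ≤ Real.sqrt 2 * (2 * (M1 * BR)) + Real.sqrt 2 * CG :=
          add_le_add (mul_le_mul_of_nonneg_left ha1sqrt (Real.sqrt_nonneg 2))
            (mul_le_mul_of_nonneg_left ha2sqrt (Real.sqrt_nonneg 2))
      _ ≤ Cc := by rw [hCcdef]; linarith
  -- assemble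
  have hCaC : Ca ≤ C := by rw [hCdef]; linarith
  have hCBC : CB ≤ C := by rw [hCdef]; linarith
  refine ⟨?_, ?_, ?_, ?_⟩
  · exact hfin _ Ca _ hCa0 hCaC partA
  · intro hjk
    exact hfin _ CB _ hCB0 hCBC (partB hjk)
  · intro hk0
    calc Real.sqrt (∫ y : ℝ, (deriv (fun z : ℝ => cutTheta Θ₀ δ lam z * R z) y) ^ 2)
        ≤ Cc := partC hk0
      _ ≤ C := by rw [hCdef]; linarith
  -- the H¹ bound
  · have hIa0 : 0 ≤ ∫ y : ℝ, (iteratedDeriv j (cutTheta Θ₀ δ lam) y * R y) ^ 2 :=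
      MeasureTheory.integral_nonneg fun y => sq_nonneg _
    have hIb0 : 0 ≤ ∫ y : ℝ,
        (deriv (fun z : ℝ => iteratedDeriv j (cutTheta Θ₀ δ lam) z * R z) y) ^ 2 :=
      MeasureTheory.integral_nonneg fun y => sq_nonneg _
    have hsum := sqrt_add_le hIa0 hIb0
    by_cases hjk : 1 ≤ j + k
    · -- use part (b)
      have hb2 := partB hjk
      have heb : u ^ (-(1:ℝ)/2 + (k:ℝ) - (j:ℝ))
          ≤ 2 * u ^ ((1:ℝ)/2 + (k:ℝ) - (j:ℝ)) := by
        have h1 : u ^ (-(1:ℝ)/2 + (k:ℝ) - (j:ℝ))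
            = u ^ ((1:ℝ)/2 + (k:ℝ) - (j:ℝ)) * u⁻¹ := by
          rw [← Real.rpow_neg_one u, ← Real.rpow_add hu0]
          congr 1
          ring
        have h2 : u⁻¹ ≤ 2 := by
          rw [inv_eq_one_div, div_le_iff₀ hu0]
          linarith
        rw [h1]
        calc u ^ ((1:ℝ)/2 + (k:ℝ) - (j:ℝ)) * u⁻¹ ≤ u ^ ((1:ℝ)/2 + (k:ℝ) - (j:ℝ)) * 2 :=
              mul_le_mul_of_nonneg_left h2 (Real.rpow_nonneg hu0.le _)
          _ = 2 * u ^ ((1:ℝ)/2 + (k:ℝ) - (j:ℝ)) := by ring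
      have hCHC : CH ≤ C := by rw [hCdef]; linarith
      apply hfin _ CH _ hCH0 hCHC
      calc Real.sqrt ((∫ y : ℝ, (iteratedDeriv j (cutTheta Θ₀ δ lam) y * R y) ^ 2) +
            ∫ y : ℝ, (deriv (fun z : ℝ => iteratedDeriv j (cutTheta Θ₀ δ lam) z * R z) y) ^ 2)
          ≤ Real.sqrt (∫ y : ℝ, (iteratedDeriv j (cutTheta Θ₀ δ lam) y * R y) ^ 2) +
            Real.sqrt (∫ y : ℝ,
              (deriv (fun z : ℝ => iteratedDeriv j (cutTheta Θ₀ δ lam) z * R z) y) ^ 2) := hsum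
        _ ≤ Ca * u ^ ((1:ℝ)/2 + (k:ℝ) - (j:ℝ)) + CB * u ^ (-(1:ℝ)/2 + (k:ℝ) - (j:ℝ)) :=
            add_le_add partA hb2
        _ ≤ Ca * u ^ ((1:ℝ)/2 + (k:ℝ) - (j:ℝ))
            + CB * (2 * u ^ ((1:ℝ)/2 + (k:ℝ) - (j:ℝ))) :=
            add_le_add_right (mul_le_mul_of_nonneg_left heb hCB0) _
        _ = (Ca + 2 * CB) * u ^ ((1:ℝ)/2 + (k:ℝ) - (j:ℝ)) := by ring
        _ ≤ CH * u ^ ((1:ℝ)/2 + (k:ℝ) - (j:ℝ)) := by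
            apply mul_le_mul_of_nonneg_right _ (Real.rpow_nonneg hu0.le _)
            rw [hCHdef]
            linarith
    · -- j = 0 and k = 0: use part (c)
      have hj0 : j = 0 := by omega
      have hk0 : k = 0 := by omega
      have hIbIc : (∫ y : ℝ,
            (deriv (fun z : ℝ => iteratedDeriv j (cutTheta Θ₀ δ lam) z * R z) y) ^ 2)
          = ∫ y : ℝ, (deriv (fun z : ℝ => cutTheta Θ₀ δ lam z * R z) y) ^ 2 := by
        simp only [hj0, iteratedDeriv_zero]
      have hea : (1:ℝ)/2 + (k:ℝ) - (j:ℝ) = (1:ℝ)/2 := by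
        rw [hj0, hk0]
        norm_num
      have hone_le : (1:ℝ) ≤ Real.sqrt 2 * u ^ ((1:ℝ)/2 + (k:ℝ) - (j:ℝ)) := by
        rw [hea]
        have h1 : ((1:ℝ)/2) ^ ((1:ℝ)/2) ≤ u ^ ((1:ℝ)/2) :=
          Real.rpow_le_rpow (by norm_num) hu12 (by norm_num)
        have h2 : Real.sqrt 2 * ((1:ℝ)/2) ^ ((1:ℝ)/2) = 1 := by
          rw [Real.sqrt_eq_rpow, ← Real.mul_rpow (by norm_num : (0:ℝ) ≤ 2) (by norm_num)]
          norm_num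
        calc (1:ℝ) = Real.sqrt 2 * ((1:ℝ)/2) ^ ((1:ℝ)/2) := h2.symm
          _ ≤ Real.sqrt 2 * u ^ ((1:ℝ)/2) :=
              mul_le_mul_of_nonneg_left h1 (Real.sqrt_nonneg 2)
      have hsqrt2 : Real.sqrt 2 ≤ 2 := by
        have h4 : Real.sqrt 2 ≤ Real.sqrt (2 ^ 2) := Real.sqrt_le_sqrt (by norm_num)
        rwa [Real.sqrt_sq (by norm_num : (0:ℝ) ≤ 2)] at h4
      have hCHC : CH ≤ C := by rw [hCdef]; linarith
      apply hfin _ CH _ hCH0 hCHC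
      calc Real.sqrt ((∫ y : ℝ, (iteratedDeriv j (cutTheta Θ₀ δ lam) y * R y) ^ 2) +
            ∫ y : ℝ, (deriv (fun z : ℝ => iteratedDeriv j (cutTheta Θ₀ δ lam) z * R z) y) ^ 2)
          ≤ Real.sqrt (∫ y : ℝ, (iteratedDeriv j (cutTheta Θ₀ δ lam) y * R y) ^ 2) +
            Real.sqrt (∫ y : ℝ,
              (deriv (fun z : ℝ => iteratedDeriv j (cutTheta Θ₀ δ lam) z * R z) y) ^ 2) := hsum
        _ = Real.sqrt (∫ y : ℝ, (iteratedDeriv j (cutTheta Θ₀ δ lam) y * R y) ^ 2) +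
            Real.sqrt (∫ y : ℝ, (deriv (fun z : ℝ => cutTheta Θ₀ δ lam z * R z) y) ^ 2) := by
            rw [hIbIc]
        _ ≤ Ca * u ^ ((1:ℝ)/2 + (k:ℝ) - (j:ℝ)) + Cc := add_le_add partA (partC hk0)
        _ ≤ Ca * u ^ ((1:ℝ)/2 + (k:ℝ) - (j:ℝ))
            + Cc * (Real.sqrt 2 * u ^ ((1:ℝ)/2 + (k:ℝ) - (j:ℝ))) := by
            have := le_mul_of_one_le_right hCc0 hone_le
            linarith
        _ ≤ Ca * u ^ ((1:ℝ)/2 + (k:ℝ) - (j:ℝ))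
            + Cc * (2 * u ^ ((1:ℝ)/2 + (k:ℝ) - (j:ℝ))) := by
            have hup : (0:ℝ) ≤ u ^ ((1:ℝ)/2 + (k:ℝ) - (j:ℝ)) := Real.rpow_nonneg hu0.le _
            have h3 : Cc * (Real.sqrt 2 * u ^ ((1:ℝ)/2 + (k:ℝ) - (j:ℝ)))
                ≤ Cc * (2 * u ^ ((1:ℝ)/2 + (k:ℝ) - (j:ℝ))) := by
              apply mul_le_mul_of_nonneg_left _ hCc0
              exact mul_le_mul_of_nonneg_right hsqrt2 hup
            linarith
        _ = (Ca + 2 * Cc) * u ^ ((1:ℝ)/2 + (k:ℝ) - (j:ℝ)) := by ring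
        _ ≤ CH * u ^ ((1:ℝ)/2 + (k:ℝ) - (j:ℝ)) := by
            apply mul_le_mul_of_nonneg_right _ (Real.rpow_nonneg hu0.le _)
            rw [hCHdef]
            linarith
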